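/- The orthogonality relation Σ_{k=j}^{n} W_{m,r}[n,k]_q · w_{m,r}[k,j]_q = δ_{nj} holds for all integers n ≥ j ≥ 0, where δ_{nj} = 1 if n = j and δ_{nj} = 0 otherwise. -/

import Mathlib

open Finset

/-- The `q`-integer `[s]_q = (q^s - 1)/(q - 1)` for an integer `s`. -/
noncomputable def qint (q : ℝ) (s : ℤ) : ℝ := (q ^ s - 1) / (q - 1)

/-- The `(q,r)`-Whitney numbers of the second kind `W_{m,r}[n,k]_q`, with `r : ℤ` so
that both `W_{m,r}` and `W_{m,-r}` are covered: `W[0,0] = 1`, `W[n,k] = 0` for `k > n`,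
and `W[n,k] = q^(m(k-1)+r) W[n-1,k-1] + [mk+r]_q W[n-1,k]`. -/
noncomputable def qWhitney2 (q : ℝ) (m : ℕ) (r : ℤ) : ℕ → ℕ → ℝ
  | 0, 0 => 1
  | 0, _ + 1 => 0
  | n + 1, 0 => qint q r * qWhitney2 q m r n 0
  | n + 1, k + 1 =>
      q ^ (m * k + r) * qWhitney2 q m r n k
        + qint q (m * (k + 1) + r) * qWhitney2 q m r n (k + 1)

lemma qWhitney2_eq_zero (q : ℝ) (m : ℕ) (r : ℤ) : ∀ n k, n < k → qWhitney2 q m r n k = 0 := by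
  intro n
  induction n with
  | zero =>
    intro k hk
    match k, hk with
    | k + 1, _ => rfl
  | succ n ih =>
    intro k hk
    match k, hk with
    | k + 1, hk =>
      have h1 : n < k := by omega
      have h2 : n < k + 1 := by omega
      simp [qWhitney2, ih _ h1, ih _ h2]

/-- the falling-factorial-type basis polynomial -/
noncomputable def pprod (q : ℝ) (m r : ℕ) (k : ℕ) (x : ℝ) : ℝ :=
  ∏ i ∈ Finset.range k, (q ^ (-((r : ℤ) + i * m)) * (x - qint q ((r : ℤ) + i * m)))

theorem qWhitney_orthogonality_second_first (q : ℝ) (hq : 0 < q) (hq1 : q ≠ 1) (m r : ℕ) (hm : 0 < m) (hr : 0 < r)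
    (w : ℕ → ℕ → ℝ)
    (hw : ∀ (n : ℕ) (x : ℝ),
      ∏ i ∈ Finset.range n, (q ^ (-((r : ℤ) + i * m)) * (x - qint q ((r : ℤ) + i * m))) =
        ∑ k ∈ Finset.range (n + 1), w n k * x ^ k)
    (n j : ℕ) (hjn : j ≤ n) :
    ∑ k ∈ Finset.Icc j n, qWhitney2 q m (r : ℤ) n k * w k j =
      if n = j then (1 : ℝ) else 0 := by
  have hq0 : q ≠ 0 := ne_of_gt hq
  -- step identity : x * p_k = q^(mk+r) p_{k+1} + [mk+r] p_k
  have hx : ∀ (k : ℕ) (x : ℝ), x * pprod q m r k x =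
      q ^ ((m : ℤ) * k + r) * pprod q m r (k + 1) x
        + qint q ((m : ℤ) * k + r) * pprod q m r k x := by
    intro k x
    have hpk : pprod q m r (k + 1) x =
        pprod q m r k x * (q ^ (-((r : ℤ) + k * m)) * (x - qint q ((r : ℤ) + k * m))) :=
      Finset.prod_range_succ _ _
    have e : ((m : ℤ) * k + r) = (r : ℤ) + (k : ℤ) * m := by ring
    rw [e]
    have h1 : q ^ ((r : ℤ) + (k : ℤ) * m) * q ^ (-((r : ℤ) + (k : ℤ) * m)) = 1 := by
      rw [← zpow_add₀ hq0, add_neg_cancel, zpow_zero]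
    calc x * pprod q m r k x
        = (q ^ ((r : ℤ) + (k : ℤ) * m) * q ^ (-((r : ℤ) + (k : ℤ) * m))) *
            (pprod q m r k x * (x - qint q ((r : ℤ) + (k : ℤ) * m)))
          + qint q ((r : ℤ) + (k : ℤ) * m) * pprod q m r k x := by rw [h1]; ring
      _ = _ := by rw [hpk]; ring
  -- recurrence unfolding
  have Wsucc : ∀ (n k : ℕ), qWhitney2 q m (r : ℤ) (n + 1) (k + 1) =
      q ^ ((m : ℤ) * k + r) * qWhitney2 q m (r : ℤ) n k
        + qint q ((m : ℤ) * (k + 1) + r) * qWhitney2 q m (r : ℤ) n (k + 1) := by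
    intro n k
    rfl
  have W0 : ∀ (n : ℕ), qWhitney2 q m (r : ℤ) (n + 1) 0 =
      qint q (r : ℤ) * qWhitney2 q m (r : ℤ) n 0 := fun n => rfl
  -- key expansion: x^n = Σ W[n,k] p_k(x)
  have hkey : ∀ (n : ℕ) (x : ℝ),
      x ^ n = ∑ k ∈ range (n + 1), qWhitney2 q m (r : ℤ) n k * pprod q m r k x := by
    intro n
    induction n with
    | zero => intro x; simp [pprod, qWhitney2]
    | succ n ih =>
      intro x
      have hstep : x ^ (n + 1) = x * x ^ n := by ring
      rw [hstep, ih x, Finset.mul_sum]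
      have L : ∑ k ∈ range (n + 1), x * (qWhitney2 q m (r : ℤ) n k * pprod q m r k x)
          = (∑ k ∈ range (n + 1),
              q ^ ((m : ℤ) * k + r) * qWhitney2 q m (r : ℤ) n k * pprod q m r (k + 1) x)
            + ∑ k ∈ range (n + 1),
              qint q ((m : ℤ) * k + r) * qWhitney2 q m (r : ℤ) n k * pprod q m r k x := by
        rw [← Finset.sum_add_distrib]
        refine Finset.sum_congr rfl fun k _ => ?_
        linear_combination qWhitney2 q m (r : ℤ) n k * hx k x
      rw [L]
      -- second sum equals the shifted sum
      have hB : ∑ k ∈ range (n + 1),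
            qint q ((m : ℤ) * k + r) * qWhitney2 q m (r : ℤ) n k * pprod q m r k x
          = (∑ k ∈ range (n + 1),
              qint q ((m : ℤ) * (k + 1) + r) * qWhitney2 q m (r : ℤ) n (k + 1)
                * pprod q m r (k + 1) x)
            + qint q ((m : ℤ) * 0 + r) * qWhitney2 q m (r : ℤ) n 0 * pprod q m r 0 x := by
        have h2 : ∑ k ∈ range (n + 2),
              qint q ((m : ℤ) * k + r) * qWhitney2 q m (r : ℤ) n k * pprod q m r k x
            = ∑ k ∈ range (n + 1),
              qint q ((m : ℤ) * k + r) * qWhitney2 q m (r : ℤ) n k * pprod q m r k x := by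
          rw [Finset.sum_range_succ, qWhitney2_eq_zero q m (r : ℤ) n (n + 1) (by omega)]
          ring
        rw [← h2]
        exact Finset.sum_range_succ'
          (fun k => qint q ((m : ℤ) * k + r) * qWhitney2 q m (r : ℤ) n k * pprod q m r k x)
          (n + 1)
      rw [hB]
      rw [Finset.sum_range_succ'
        (fun k => qWhitney2 q m (r : ℤ) (n + 1) k * pprod q m r k x) (n + 1)]
      simp only [Wsucc, W0]
      rw [← add_assoc, ← Finset.sum_add_distrib]
      congr 1
      · refine Finset.sum_congr rfl fun k _ => ?_
        ring
      · norm_num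
  -- polynomial identity
  have hswap : ∀ x : ℝ,
      ∑ i ∈ range (n + 1),
        (∑ k ∈ Icc i n, qWhitney2 q m (r : ℤ) n k * w k i) * x ^ i = x ^ n := by
    intro x
    have h1 : ∑ i ∈ range (n + 1),
          (∑ k ∈ Icc i n, qWhitney2 q m (r : ℤ) n k * w k i) * x ^ i
        = ∑ i ∈ range (n + 1), ∑ k ∈ Icc i n,
            qWhitney2 q m (r : ℤ) n k * (w k i * x ^ i) := by
      refine Finset.sum_congr rfl fun i _ => ?_
      rw [Finset.sum_mul]
      refine Finset.sum_congr rfl fun k _ => ?_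
      ring
    rw [h1]
    rw [Finset.sum_comm' (s' := fun k => range (k + 1)) (t' := range (n + 1))
      (by
        intro i k
        simp only [Finset.mem_range, Finset.mem_Icc]
        omega)]
    have h2 : ∀ k ∈ range (n + 1),
        ∑ i ∈ range (k + 1), qWhitney2 q m (r : ℤ) n k * (w k i * x ^ i)
          = qWhitney2 q m (r : ℤ) n k * pprod q m r k x := by
      intro k _
      rw [← Finset.mul_sum]
      congr 1
      rw [← hw k x]
      rfl
    rw [Finset.sum_congr rfl h2]
    exact (hkey n x).symm
  -- transfer to polynomials to compare coefficients
  have hpoly : (∑ i ∈ range (n + 1),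
        Polynomial.C (∑ k ∈ Icc i n, qWhitney2 q m (r : ℤ) n k * w k i) * Polynomial.X ^ i)
      = (Polynomial.X ^ n : Polynomial ℝ) := by
    apply Polynomial.funext
    intro x
    simp only [Polynomial.eval_finset_sum, Polynomial.eval_mul, Polynomial.eval_C,
      Polynomial.eval_pow, Polynomial.eval_X]
    exact hswap x
  have hc := congrArg (fun P : Polynomial ℝ => P.coeff j) hpoly
  simp only [Polynomial.finset_sum_coeff, Polynomial.coeff_C_mul,
    Polynomial.coeff_X_pow, mul_ite, mul_one, mul_zero] at hc
  rw [Finset.sum_ite_eq (range (n + 1)) j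
    (fun i => ∑ k ∈ Icc i n, qWhitney2 q m (r : ℤ) n k * w k i)] at hc
  rw [if_pos (Finset.mem_range.2 (by omega))] at hc
  rw [hc]
  rcases eq_or_ne n j with h | h
  · simp [h]
  · simp [h, Ne.symm h]
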